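/- Define T_p : ℂ ∖ I_p → ℝ by T_p(w) = Im(conj(w)·√(D_p(w)))/Im(w) for w ∉ ℝ and T_p(t) = (−(1−2a)𝒜t − 1)/√(D_p(t)) for t ∈ ℝ, and define T_q : ℂ ∖ I_q → ℝ analogously with b, 𝓑, D_q in place of a, 𝒜, D_p. Then: (1) T_p(g) + T_q(h) → −2 as (g,h) → (0,0) within (ℂ ∖ I_p) × (ℂ ∖ I_q); (2) consequently, the function l(g,h) = (T_p(g) + T_q(h))/(2|g|²) tends to −∞ as (g,h) → (0,0) within {(g,h) ∈ (ℂ ∖ I_p) × (ℂ ∖ I_q) : g ≠ 0}. -/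

import Mathlib

open Set Filter

lemma sqrtlim (a A : ℝ) (ha0 : 0 < a) (ha1 : a < 1) (T : ℂ → ℝ)
    (hT : ∀ w : ℂ, w.im ≠ 0 → T w =
      ((starRingEnd ℂ) w * (((A : ℂ) * w + ((1 - 2 * a : ℝ) : ℂ)) ^ 2
        + ((4 * a * (1 - a) : ℝ) : ℂ)) ^ ((1 : ℂ) / 2)).im / w.im)
    (hTR : ∀ t : ℝ, T (t : ℂ) =
      (-(1 - 2 * a) * A * t - 1) / Real.sqrt ((A * t + (1 - 2 * a)) ^ 2 + 4 * a * (1 - a))) :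
    Tendsto T (nhds 0) (nhds (-1)) := by
  set c : ℝ := 1 - 2 * a with hc
  set d : ℝ := 4 * a * (1 - a) with hd
  have hd0 : 0 < d := by nlinarith
  have hcd : c ^ 2 + d = 1 := by ring
  set D : ℂ → ℂ := fun w => ((A : ℂ) * w + (c : ℂ)) ^ 2 + (d : ℂ) with hDdef
  set s : ℂ → ℂ := fun w => D w ^ ((1 : ℂ) / 2) with hsdef
  have hsq : ∀ w, s w ^ 2 = D w := by
    intro w
    have : ((1 : ℂ) / 2) = (((2 : ℕ) : ℂ))⁻¹ := by norm_num
    rw [hsdef]; simp only [this]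
    exact_mod_cast Complex.cpow_nat_inv_pow (D w) (by norm_num)
  have hD0 : D 0 = 1 := by
    have : (c:ℂ)^2 + (d:ℂ) = ((c^2+d : ℝ) : ℂ) := by push_cast; ring
    simp only [hDdef, mul_zero, zero_add, this, hcd]
    norm_num
  have hDcont : Continuous D := by
    fun_prop
  have hscont : ContinuousAt s 0 := by
    apply ContinuousAt.comp (g := fun z => z ^ ((1:ℂ)/2))
    · rw [hD0]
      exact continuousAt_cpow_const (by simp [Complex.slitPlane])
    · exact hDcont.continuousAt
  have hs0 : s 0 = 1 := by
    rw [hsdef]; simp [hD0]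
  have hstend : Tendsto s (nhds 0) (nhds 1) := by
    simpa [hs0] using hscont.tendsto
  -- the smooth formula
  set F : ℂ → ℝ := fun w => -(s w).re + w.re * A * (A * w.re + c) / (s w).re with hFdef
  have hFtend : Tendsto F (nhds 0) (nhds (-1)) := by
    have hre : Tendsto (fun w => (s w).re) (nhds 0) (nhds 1) :=
      (Complex.continuous_re.tendsto 1).comp hstend
    have : Tendsto F (nhds 0) (nhds (-1 + (0:ℝ) * A * (A * 0 + c) / 1)) := by
      apply Tendsto.add
      · exact hre.neg
      · apply Tendsto.div
        · apply Tendsto.mul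
          apply Tendsto.mul
          · exact (Complex.continuous_re.tendsto 0).comp tendsto_id
          · exact tendsto_const_nhds
          · apply Tendsto.add
            · exact tendsto_const_nhds.mul ((Complex.continuous_re.tendsto 0).comp tendsto_id)
            · exact tendsto_const_nhds
        · exact hre
        · norm_num
    simpa using this
  have heq : T =ᶠ[nhds 0] F := by
    have h1 : ∀ᶠ w in nhds (0:ℂ), (1:ℝ)/2 < (s w).re := by
      have hre : Tendsto (fun w => (s w).re) (nhds 0) (nhds 1) :=
        (Complex.continuous_re.tendsto 1).comp hstend
      exact hre.eventually (eventually_gt_nhds (by norm_num))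
    filter_upwards [h1] with w hw
    have hsre : (s w).re ≠ 0 := by linarith
    by_cases him : w.im = 0
    · -- real case
      have hw' : w = ((w.re : ℝ) : ℂ) := by
        apply Complex.ext <;> simp [him]
      set t := w.re with ht
      have hDt : D w = ((((A * t + c) ^ 2 + d : ℝ)) : ℂ) := by
        rw [hw']; push_cast [hDdef]; ring
      have hpos : (0:ℝ) < (A * t + c) ^ 2 + d := by positivity
      have hsw : s w = ((Real.sqrt ((A * t + c) ^ 2 + d) : ℝ) : ℂ) := by
        rw [hsdef]; simp only [hDt]
        rw [Real.sqrt_eq_rpow, Complex.ofReal_cpow hpos.le]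
        norm_num
      have hr0 : Real.sqrt ((A * t + c) ^ 2 + d) ≠ 0 := Real.sqrt_ne_zero'.2 hpos
      have hr2 : Real.sqrt ((A * t + c) ^ 2 + d) ^ 2 = (A * t + c) ^ 2 + d :=
        Real.sq_sqrt hpos.le
      have hTt : T w = (-c * A * t - 1) / Real.sqrt ((A * t + c) ^ 2 + d) := by
        rw [hw']; exact hTR t
      rw [hTt, hFdef]
      simp only [hsw, Complex.ofReal_re, ← ht]
      field_simp
      nlinarith [hr2, hcd]
    · -- nonreal case
      have hTw : T w = ((starRingEnd ℂ) w * s w).im / w.im := hT w him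
      have hIm : ((starRingEnd ℂ) w * s w).im = w.re * (s w).im - w.im * (s w).re := by
        simp [Complex.mul_im]; ring
      have hImD : (D w).im = 2 * (A * w.re + c) * (A * w.im) := by
        simp [hDdef, Complex.add_im, Complex.mul_im, Complex.mul_re, pow_two]
        ring
      have hImsq : (s w ^ 2).im = 2 * (s w).re * (s w).im := by
        rw [pow_two]; simp [Complex.mul_im]; ring
      have key : (s w).im = A * w.im * (A * w.re + c) / (s w).re := by
        have := hsq w
        have h2 : 2 * (s w).re * (s w).im = 2 * (A * w.re + c) * (A * w.im) := by
          rw [← hImsq, this, hImD]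
        field_simp
        linarith [h2]
      rw [hTw, hIm, key, hFdef]
      field_simp
      ring
  exact hFtend.congr' heq.symm


theorem stmt8 (a b α α' β β' : ℝ)
    (ha : a ∈ Ioo (0 : ℝ) 1) (hb : b ∈ Ioo (0 : ℝ) 1) (hαα : α ≠ α') (hββ : β ≠ β')
    (𝒜 ℬ : ℝ) (h𝒜 : 𝒜 = α' - α) (hℬ : ℬ = β' - β)
    (Dp Dq : ℂ → ℂ)
    (hDp : ∀ w : ℂ, Dp w = ((𝒜 : ℂ) * w + ((1 - 2 * a : ℝ) : ℂ)) ^ 2 + ((4 * a * (1 - a) : ℝ) : ℂ))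
    (hDq : ∀ w : ℂ, Dq w = ((ℬ : ℂ) * w + ((1 - 2 * b : ℝ) : ℂ)) ^ 2 + ((4 * b * (1 - b) : ℝ) : ℂ))
    (Ip Iq : Set ℂ)
    (hIp : Ip = {w : ℂ | w.re = -(1 - 2 * a) / 𝒜 ∧ 2 * Real.sqrt (a * (1 - a)) / |𝒜| < |w.im|})
    (hIq : Iq = {w : ℂ | w.re = -(1 - 2 * b) / ℬ ∧ 2 * Real.sqrt (b * (1 - b)) / |ℬ| < |w.im|})
    (Tp Tq : ℂ → ℝ)
    (hTp : ∀ w : ℂ, w.im ≠ 0 → Tp w = ((starRingEnd ℂ) w * (Dp w) ^ ((1 : ℂ) / 2)).im / w.im)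
    (hTpR : ∀ t : ℝ, Tp (t : ℂ) =
      (-(1 - 2 * a) * 𝒜 * t - 1) / Real.sqrt ((𝒜 * t + (1 - 2 * a)) ^ 2 + 4 * a * (1 - a)))
    (hTq : ∀ w : ℂ, w.im ≠ 0 → Tq w = ((starRingEnd ℂ) w * (Dq w) ^ ((1 : ℂ) / 2)).im / w.im)
    (hTqR : ∀ t : ℝ, Tq (t : ℂ) =
      (-(1 - 2 * b) * ℬ * t - 1) / Real.sqrt ((ℬ * t + (1 - 2 * b)) ^ 2 + 4 * b * (1 - b))) :
    -- (1) T_p(g) + T_q(h) → −2 as (g,h) → (0,0)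
    Tendsto (fun p : ℂ × ℂ => Tp p.1 + Tq p.2)
      (nhdsWithin (0, 0) (Ipᶜ ×ˢ Iqᶜ)) (nhds (-2))
    -- (2) l(g,h) → −∞ as (g,h) → (0,0)
    ∧ Tendsto (fun p : ℂ × ℂ => (Tp p.1 + Tq p.2) / (2 * ‖p.1‖ ^ 2))
      (nhdsWithin (0, 0) {p : ℂ × ℂ | p.1 ∉ Ip ∧ p.2 ∉ Iq ∧ p.1 ≠ 0}) atBot := by

  have hP : Tendsto Tp (nhds 0) (nhds (-1)) :=
    sqrtlim a 𝒜 ha.1 ha.2 Tp (fun w h => by rw [hTp w h, hDp w]) hTpR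
  have hQ : Tendsto Tq (nhds 0) (nhds (-1)) :=
    sqrtlim b ℬ hb.1 hb.2 Tq (fun w h => by rw [hTq w h, hDq w]) hTqR
  have hsum : Tendsto (fun p : ℂ × ℂ => Tp p.1 + Tq p.2) (nhds ((0:ℂ), (0:ℂ))) (nhds (-2)) := by
    have h1 : Tendsto (fun p : ℂ × ℂ => p.1) (nhds ((0:ℂ),(0:ℂ))) (nhds 0) :=
      continuousAt_fst
    have h2 : Tendsto (fun p : ℂ × ℂ => p.2) (nhds ((0:ℂ),(0:ℂ))) (nhds 0) :=
      continuousAt_snd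
    have := (hP.comp h1).add (hQ.comp h2)
    norm_num at this
    exact this
  constructor
  · exact hsum.mono_left nhdsWithin_le_nhds
  · set S : Set (ℂ × ℂ) := {p : ℂ × ℂ | p.1 ∉ Ip ∧ p.2 ∉ Iq ∧ p.1 ≠ 0} with hS
    have hf : Tendsto (fun p : ℂ × ℂ => Tp p.1 + Tq p.2) (nhdsWithin ((0:ℂ),(0:ℂ)) S)
        (nhds (-2)) := hsum.mono_left nhdsWithin_le_nhds
    have hg : Tendsto (fun p : ℂ × ℂ => 2 * ‖p.1‖ ^ 2)
        (nhdsWithin ((0:ℂ),(0:ℂ)) S) (nhdsWithin 0 (Set.Ioi 0)) := by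
      apply tendsto_nhdsWithin_of_tendsto_nhds_of_eventually_within
      · have : Tendsto (fun p : ℂ × ℂ => 2 * ‖p.1‖ ^ 2) (nhds ((0:ℂ),(0:ℂ)))
            (nhds (2 * ‖(0:ℂ)‖ ^ 2)) := by
          apply ContinuousAt.tendsto
          exact (continuousAt_const.mul ((continuous_norm.comp continuous_fst).continuousAt.pow 2))
        simpa using this.mono_left nhdsWithin_le_nhds
      · filter_upwards [self_mem_nhdsWithin] with p hp
        have hp1 : p.1 ≠ 0 := hp.2.2
        have : 0 < ‖p.1‖ := by simpa using hp1
        simp only [Set.mem_Ioi]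
        positivity
    have hinv : Tendsto (fun p : ℂ × ℂ => (2 * ‖p.1‖ ^ 2)⁻¹)
        (nhdsWithin ((0:ℂ),(0:ℂ)) S) atTop := tendsto_inv_nhdsGT_zero.comp hg
    simp only [div_eq_mul_inv]
    exact Tendsto.neg_mul_atTop (by norm_num) hf hinv
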